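/- Let F : ℝⁿ → ℝⁿ be C¹ with L-Lipschitz Jacobian on a convex set, x in the set, s̃ ∈ ℝⁿ with ‖F'(x)s̃ + F(x)‖ ≤ δ‖F(x)‖ and ‖s̃‖ ≤ K‖F(x)‖, where δ ∈ [0,1), K > 0, α ∈ (0,1). If λ ∈ (0,1] satisfies (L/2)K²λ‖F(x)‖ < α and λ(1−α−δ) ≥ 2α (assuming δ < 1−3α), then ‖F(x + λs̃)‖ ≤ (1 − α(1+λ))‖F(x)‖. -/

import Mathlib

open Set

lemma taylor_quad {E : Type*} [NormedAddCommGroup E] [NormedSpace ℝ E]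
    (F : E → E) (hF : ContDiff ℝ 1 F) (L : ℝ) (hL : 0 ≤ L) (x v : E)
    (hlip : ∀ t ∈ Set.Icc (0:ℝ) 1, ‖fderiv ℝ F (x + t • v) - fderiv ℝ F x‖ ≤ L * (t * ‖v‖)) :
    ‖F (x + v) - F x - fderiv ℝ F x v‖ ≤ L / 2 * ‖v‖ ^ 2 := by
  set g : ℝ → E := fun t => F (x + t • v) - F x - t • fderiv ℝ F x v with hg
  have hderiv : ∀ t : ℝ, HasDerivAt g (fderiv ℝ F (x + t • v) v - fderiv ℝ F x v) t := by
    intro t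
    have h1 : HasDerivAt (fun t : ℝ => x + t • v) v t := by
      simpa using ((hasDerivAt_id t).smul_const v).const_add x
    have h2 : HasDerivAt (fun t : ℝ => F (x + t • v)) (fderiv ℝ F (x + t • v) v) t :=
      ((hF.differentiable one_ne_zero (x + t • v)).hasFDerivAt).comp_hasDerivAt t h1
    have h3 := (h2.sub_const (F x)).sub ((hasDerivAt_id t).smul_const (fderiv ℝ F x v))
    simp only [one_smul] at h3
    exact h3
  have key : ∀ t ∈ Icc (0:ℝ) 1, ‖g t‖ ≤ L * ‖v‖ ^ 2 * t ^ 2 / 2 := by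
    refine image_norm_le_of_norm_deriv_right_le_deriv_boundary (f := g)
      (f' := fun t => fderiv ℝ F (x + t • v) v - fderiv ℝ F x v)
      (B := fun t => L * ‖v‖ ^ 2 * t ^ 2 / 2) (B' := fun t => L * ‖v‖ ^ 2 * t)
      ?_ ?_ ?_ ?_ ?_
    · exact fun t _ => (hderiv t).continuousAt.continuousWithinAt
    · exact fun t _ => (hderiv t).hasDerivWithinAt
    · simp [hg]
    · intro t
      have : HasDerivAt (fun t : ℝ => L * ‖v‖ ^ 2 * t ^ 2 / 2) (L * ‖v‖ ^ 2 * t) t := by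
        have := ((hasDerivAt_pow 2 t).const_mul (L * ‖v‖ ^ 2)).div_const 2
        refine this.congr_deriv ?_
        rw [show (2:ℕ) - 1 = 1 from rfl]
        ring
      exact this
    · intro t ht
      have : ‖(fderiv ℝ F (x + t • v) - fderiv ℝ F x) v‖ ≤ L * (t * ‖v‖) * ‖v‖ :=
        le_trans (le_trans (ContinuousLinearMap.le_opNorm _ v)
          (mul_le_mul_of_nonneg_right (hlip t ⟨ht.1, ht.2.le⟩) (norm_nonneg v))) le_rfl
      calc ‖fderiv ℝ F (x + t • v) v - fderiv ℝ F x v‖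
          = ‖(fderiv ℝ F (x + t • v) - fderiv ℝ F x) v‖ := by simp
        _ ≤ L * (t * ‖v‖) * ‖v‖ := this
        _ = L * ‖v‖ ^ 2 * t := by ring
  have := key 1 ⟨zero_le_one, le_rfl⟩
  simpa [hg] using this.trans_eq (by ring)

theorem stmt_13 (n : ℕ) (F : EuclideanSpace ℝ (Fin n) → EuclideanSpace ℝ (Fin n))
    (hF : ContDiff ℝ 1 F)
    (S : Set (EuclideanSpace ℝ (Fin n))) (hSconv : Convex ℝ S)
    (L : ℝ) (hL : 0 ≤ L)
    (hLip : ∀ u ∈ S, ∀ v ∈ S, ‖fderiv ℝ F u - fderiv ℝ F v‖ ≤ L * ‖u - v‖)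
    (x stil : EuclideanSpace ℝ (Fin n)) (δ K α lam : ℝ)
    (hδ : δ ∈ Set.Ico (0 : ℝ) 1) (hK : 0 < K) (hα : α ∈ Set.Ioo (0 : ℝ) 1)
    (hδα : δ < 1 - 3 * α)
    (hres : ‖fderiv ℝ F x stil + F x‖ ≤ δ * ‖F x‖)
    (hstil : ‖stil‖ ≤ K * ‖F x‖)
    (hlam : lam ∈ Set.Ioc (0 : ℝ) 1)
    (hseg : ∀ t ∈ Set.Icc (0 : ℝ) 1, x + (t * lam) • stil ∈ S)
    (hsmall : L / 2 * K ^ 2 * lam * ‖F x‖ < α)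
    (hlarge : lam * (1 - α - δ) ≥ 2 * α) :
    ‖F (x + lam • stil)‖ ≤ (1 - α * (1 + lam)) * ‖F x‖ := by
  set v : EuclideanSpace ℝ (Fin n) := lam • stil with hv
  have hxS : x ∈ S := by simpa using hseg 0 ⟨le_rfl, zero_le_one⟩
  have hlipseg : ∀ t ∈ Set.Icc (0:ℝ) 1,
      ‖fderiv ℝ F (x + t • v) - fderiv ℝ F x‖ ≤ L * (t * ‖v‖) := by
    intro t ht
    have hmem : x + t • v ∈ S := by
      have := hseg t ht
      simpa [hv, mul_smul] using this
    have := hLip _ hmem _ hxS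
    calc ‖fderiv ℝ F (x + t • v) - fderiv ℝ F x‖ ≤ L * ‖x + t • v - x‖ := this
      _ = L * (t * ‖v‖) := by
          rw [add_sub_cancel_left, norm_smul, Real.norm_eq_abs, abs_of_nonneg ht.1]
  have htay := taylor_quad F hF L hL x v hlipseg
  have hvK : ‖v‖ ≤ lam * (K * ‖F x‖) := by
    rw [hv, norm_smul, Real.norm_eq_abs, abs_of_pos hlam.1]
    exact mul_le_mul_of_nonneg_left hstil hlam.1.le
  have hlin : ‖F x + fderiv ℝ F x v‖ ≤ ((1 - lam) + lam * δ) * ‖F x‖ := by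
    have heq : F x + fderiv ℝ F x v
        = (1 - lam) • F x + lam • (fderiv ℝ F x stil + F x) := by
      rw [hv, map_smul]
      module
    rw [heq]
    calc ‖(1 - lam) • F x + lam • (fderiv ℝ F x stil + F x)‖
        ≤ ‖(1 - lam) • F x‖ + ‖lam • (fderiv ℝ F x stil + F x)‖ := norm_add_le _ _
      _ ≤ (1 - lam) * ‖F x‖ + lam * (δ * ‖F x‖) := by
          rw [norm_smul, norm_smul, Real.norm_eq_abs, Real.norm_eq_abs,
            abs_of_nonneg (by linarith [hlam.2] : (0:ℝ) ≤ 1 - lam), abs_of_pos hlam.1]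
          exact add_le_add le_rfl (mul_le_mul_of_nonneg_left hres hlam.1.le)
      _ = ((1 - lam) + lam * δ) * ‖F x‖ := by ring
  have hnorm : ‖F (x + v)‖ ≤ ((1 - lam) + lam * δ) * ‖F x‖ + L / 2 * ‖v‖ ^ 2 := by
    calc ‖F (x + v)‖
        = ‖(F x + fderiv ℝ F x v) + (F (x + v) - F x - fderiv ℝ F x v)‖ := by
          congr 1; abel
      _ ≤ ‖F x + fderiv ℝ F x v‖ + ‖F (x + v) - F x - fderiv ℝ F x v‖ := norm_add_le _ _
      _ ≤ ((1 - lam) + lam * δ) * ‖F x‖ + L / 2 * ‖v‖ ^ 2 := add_le_add hlin htay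
  have hquad : L / 2 * ‖v‖ ^ 2 ≤ α * (lam * ‖F x‖) := by
    have h1 : L / 2 * ‖v‖ ^ 2 ≤ L / 2 * (lam * (K * ‖F x‖)) ^ 2 := by
      apply mul_le_mul_of_nonneg_left _ (by linarith)
      exact pow_le_pow_left₀ (norm_nonneg v) hvK 2
    have h2 : L / 2 * (lam * (K * ‖F x‖)) ^ 2
        = (L / 2 * K ^ 2 * lam * ‖F x‖) * (lam * ‖F x‖) := by ring
    have h3 : (L / 2 * K ^ 2 * lam * ‖F x‖) * (lam * ‖F x‖) ≤ α * (lam * ‖F x‖) :=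
      mul_le_mul_of_nonneg_right hsmall.le
        (mul_nonneg hlam.1.le (norm_nonneg _))
    linarith
  have hcoef : ((1 - lam) + lam * δ) + α * lam ≤ 1 - α * (1 + lam) := by
    nlinarith [hα.1, hα.2, hlam.1, hlam.2, hδ.1]
  have hFx : (0:ℝ) ≤ ‖F x‖ := norm_nonneg _
  calc ‖F (x + v)‖ ≤ ((1 - lam) + lam * δ) * ‖F x‖ + α * (lam * ‖F x‖) := by linarith
    _ = (((1 - lam) + lam * δ) + α * lam) * ‖F x‖ := by ring
    _ ≤ (1 - α * (1 + lam)) * ‖F x‖ := mul_le_mul_of_nonneg_right hcoef hFx
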